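/- Let p, q > 1 be real numbers with p + q = 2*_k and p > 2*_k/2 > q. There exists a constant C > 0, depending only on n, k and p, such that for all μ₁, μ₂ > 0 and all ξ₁, ξ₂ ∈ ℝⁿ one has ∫_{ℝⁿ} U_{μ₁,ξ₁}^{p} U_{μ₂,ξ₂}^{q} dx ≤ C · ε₁₂^{q}. -/

import Mathlib

open MeasureTheory Real

/-- The constant `𝔠_{n,k} := (∏_{j=-k}^{k-1} (n+2j))^{1/k}` (reindexed by `j ↦ j - k`). -/
noncomputable def cnk (n k : ℕ) : ℝ :=
  (∏ j ∈ Finset.range (2 * k), ((n : ℝ) + 2 * j - 2 * k)) ^ ((k : ℝ)⁻¹)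

/-- The standard bubble `U_{μ,ξ}(x) = μ^{(n-2k)/2} (μ² + 𝔠_{n,k}⁻¹ |x-ξ|²)^{(2k-n)/2}`. -/
noncomputable def stdBubble (n k : ℕ) (μ : ℝ) (ξ x : EuclideanSpace ℝ (Fin n)) : ℝ :=
  μ ^ (((n : ℝ) - 2 * k) / 2) *
    (μ ^ 2 + (cnk n k)⁻¹ * ‖x - ξ‖ ^ 2) ^ (((2 * k : ℝ) - n) / 2)

/-- The interaction quantity
`ε₁₂ = (μ₁/μ₂ + μ₂/μ₁ + 𝔠_{n,k}⁻¹ |ξ₁-ξ₂|²/(μ₁μ₂))^{(2k-n)/2}`. -/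
noncomputable def interact (n k : ℕ) (μ₁ μ₂ : ℝ)
    (ξ₁ ξ₂ : EuclideanSpace ℝ (Fin n)) : ℝ :=
  (μ₁ / μ₂ + μ₂ / μ₁ + (cnk n k)⁻¹ * ‖ξ₁ - ξ₂‖ ^ 2 / (μ₁ * μ₂)) ^ (((2 * k : ℝ) - n) / 2)
open MeasureTheory Real Metric Module Set

lemma aux_ballInt {n : ℕ} (hn : 0 < n) {s : ℝ} (hs0 : 0 < s) (hsn : s < n) :
    IntegrableOn (fun z : EuclideanSpace ℝ (Fin n) => ‖z‖ ^ (-s))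
      (ball (0 : EuclideanSpace ℝ (Fin n)) 1) volume := by
  set E := EuclideanSpace ℝ (Fin n) with hE
  have hfr : finrank ℝ E = n := finrank_euclideanSpace_fin
  have hnt : Nontrivial E := nontrivial_of_finrank_pos (R := ℝ) (by rw [hfr]; exact hn)
  have hmeas : Measurable fun z : E => ‖z‖ ^ (-s) := by fun_prop
  have hnn : ∀ z : E, 0 ≤ ‖z‖ ^ (-s) := fun z => rpow_nonneg (norm_nonneg _) _
  constructor
  · exact hmeas.aestronglyMeasurable
  · rw [hasFiniteIntegral_iff_ofReal (ae_of_all _ hnn)]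
    rw [lintegral_eq_lintegral_meas_le _ (ae_of_all _ hnn) hmeas.aemeasurable]
    -- the superlevel sets
    have hsub : ∀ t : ℝ, 0 < t →
        {a : E | t ≤ ‖a‖ ^ (-s)} ⊆ closedBall 0 (t ^ (-s⁻¹)) := by
      intro t ht a ha
      simp only [mem_setOf_eq] at ha
      rcases eq_or_ne a 0 with rfl | ha0
      · exfalso
        rw [norm_zero, zero_rpow (neg_ne_zero.2 hs0.ne')] at ha
        · exact absurd (ht.trans_le ha) (lt_irrefl 0)
      · have hna : 0 < ‖a‖ := norm_pos_iff.2 ha0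
        have h1 : (‖a‖ ^ (-s)) ^ (-s⁻¹) ≤ t ^ (-s⁻¹) :=
          rpow_le_rpow_of_nonpos ht ha (neg_nonpos.2 (inv_nonneg.2 hs0.le))
        rw [← Real.rpow_mul (norm_nonneg a), neg_mul_neg,
          mul_inv_cancel₀ hs0.ne', Real.rpow_one] at h1
        simpa [mem_closedBall, dist_eq_norm] using h1
    have hB : volume (ball (0:E) 1) < ⊤ := measure_ball_lt_top
    calc ∫⁻ t in Ioi (0:ℝ), (volume.restrict (ball (0:E) 1)) {a : E | t ≤ ‖a‖ ^ (-s)}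
        ≤ ∫⁻ t in Ioc (0:ℝ) 1 ∪ Ioi 1, (volume.restrict (ball (0:E) 1)) {a : E | t ≤ ‖a‖ ^ (-s)} :=
          lintegral_mono_set Ioi_subset_Ioc_union_Ioi
      _ ≤ (∫⁻ t in Ioc (0:ℝ) 1, (volume.restrict (ball (0:E) 1)) {a : E | t ≤ ‖a‖ ^ (-s)})
          + ∫⁻ t in Ioi (1:ℝ), (volume.restrict (ball (0:E) 1)) {a : E | t ≤ ‖a‖ ^ (-s)} :=
          lintegral_union_le _ _ _
      _ < ⊤ := by
          refine ENNReal.add_lt_top.2 ⟨?_, ?_⟩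
          · calc (∫⁻ t in Ioc (0:ℝ) 1, (volume.restrict (ball (0:E) 1)) {a : E | t ≤ ‖a‖ ^ (-s)})
                ≤ ∫⁻ _ in Ioc (0:ℝ) 1, volume (ball (0:E) 1) := by
                  refine lintegral_mono fun t => ?_
                  calc (volume.restrict (ball (0:E) 1)) {a : E | t ≤ ‖a‖ ^ (-s)}
                      ≤ (volume.restrict (ball (0:E) 1)) univ := measure_mono (subset_univ _)
                    _ = volume (ball (0:E) 1) := by simp
              _ < ⊤ := by
                  rw [setLIntegral_const]
                  exact ENNReal.mul_lt_top hB (by simp)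
          · have he : -(s⁻¹ * n) < -1 := by
              have : (1:ℝ) < s⁻¹ * n := by
                rw [← div_eq_inv_mul]
                exact (one_lt_div hs0).2 hsn
              linarith
            calc (∫⁻ t in Ioi (1:ℝ), (volume.restrict (ball (0:E) 1)) {a : E | t ≤ ‖a‖ ^ (-s)})
                ≤ ∫⁻ t in Ioi (1:ℝ), ENNReal.ofReal (t ^ (-(s⁻¹ * n))) * volume (ball (0:E) 1) := by
                  refine setLIntegral_mono' measurableSet_Ioi fun t ht => ?_
                  have ht1 : (1:ℝ) < t := ht
                  have ht0 : 0 < t := lt_trans one_pos ht1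
                  calc (volume.restrict (ball (0:E) 1)) {a : E | t ≤ ‖a‖ ^ (-s)}
                      ≤ volume {a : E | t ≤ ‖a‖ ^ (-s)} := Measure.restrict_le_self _
                    _ ≤ volume (closedBall (0:E) (t ^ (-s⁻¹))) := measure_mono (hsub t ht0)
                    _ = ENNReal.ofReal ((t ^ (-s⁻¹)) ^ finrank ℝ E) * volume (ball (0:E) 1) :=
                        Measure.addHaar_closedBall _ _ (rpow_nonneg ht0.le _)
                    _ = ENNReal.ofReal (t ^ (-(s⁻¹ * n))) * volume (ball (0:E) 1) := by
                        rw [hfr, ← Real.rpow_natCast (t ^ (-s⁻¹)) n, ← Real.rpow_mul ht0.le]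
                        ring_nf
              _ < ⊤ := by
                  rw [lintegral_mul_const' _ _ hB.ne]
                  refine ENNReal.mul_lt_top ?_ hB
                  exact (integrableOn_Ioi_rpow_of_lt he one_pos).setLIntegral_lt_top

lemma aux_int_a {n : ℕ} {a : ℝ} (hna : (n:ℝ) < 2 * a) :
    Integrable (fun y : EuclideanSpace ℝ (Fin n) => (1 + ‖y‖ ^ 2) ^ (-a)) volume := by
  have h := integrable_rpow_neg_one_add_norm_sq (E := EuclideanSpace ℝ (Fin n)) (μ := volume)
    (r := 2 * a) (by rw [finrank_euclideanSpace_fin]; exact hna)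
  simpa [show -(2*a)/2 = -a by ring] using h

lemma aux_ball_val {n : ℕ} (hn : 0 < n) {s : ℝ} (hs0 : 0 < s) (hsn : s < n)
    (η : EuclideanSpace ℝ (Fin n)) {R : ℝ} (hR : 0 < R) :
    IntegrableOn (fun y : EuclideanSpace ℝ (Fin n) => ‖y - η‖ ^ (-s)) (ball η R) volume ∧
      (∫ y in ball η R, ‖y - η‖ ^ (-s)) =
        R ^ ((n:ℝ) - s) * ∫ z in ball (0 : EuclideanSpace ℝ (Fin n)) 1, ‖z‖ ^ (-s) := by
  have hfr : finrank ℝ (EuclideanSpace ℝ (Fin n)) = n := finrank_euclideanSpace_fin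
  have hmeas : Measurable fun z : EuclideanSpace ℝ (Fin n) => ‖z‖ ^ (-s) := by fun_prop
  have hI1 := aux_ballInt hn hs0 hsn
  -- integrable on ball 0 R
  have hIR : IntegrableOn (fun z : EuclideanSpace ℝ (Fin n) => ‖z‖ ^ (-s))
      (ball (0 : EuclideanSpace ℝ (Fin n)) R) volume := by
    refine IntegrableOn.mono_set (t := ball 0 1 ∪ (ball 0 R \ ball 0 1)) ?_ ?_
    · refine hI1.union ?_
      refine Measure.integrableOn_of_bounded (M := 1) ?_ hmeas.aestronglyMeasurable ?_
      · exact ((measure_mono diff_subset).trans_lt measure_ball_lt_top).ne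
      · refine (ae_restrict_mem ((measurableSet_ball).diff measurableSet_ball)).mono fun z hz => ?_
        have h1 : (1:ℝ) ≤ ‖z‖ := by
          by_contra h
          exact hz.2 (by simpa [mem_ball, dist_eq_norm] using lt_of_not_ge h)
        rw [Real.norm_eq_abs, abs_of_nonneg (rpow_nonneg (norm_nonneg _) _)]
        exact rpow_le_one_of_one_le_of_nonpos h1 (neg_nonpos.2 hs0.le)
    · intro z hz
      rcases lt_or_ge ‖z‖ 1 with h | h
      · exact Or.inl (by simpa [mem_ball, dist_eq_norm] using h)
      · exact Or.inr ⟨hz, fun hz1 => absurd (by simpa [mem_ball, dist_eq_norm] using hz1) (not_lt.2 h)⟩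
  -- value on ball 0 R by scaling
  have hval0 : (∫ z in ball (0 : EuclideanSpace ℝ (Fin n)) R, ‖z‖ ^ (-s))
      = R ^ ((n:ℝ) - s) * ∫ z in ball (0 : EuclideanSpace ℝ (Fin n)) 1, ‖z‖ ^ (-s) := by
    have hcomp := Measure.setIntegral_comp_smul_of_pos volume
      (fun z : EuclideanSpace ℝ (Fin n) => ‖z‖ ^ (-s)) (ball (0 : EuclideanSpace ℝ (Fin n)) 1) hR
    rw [smul_unitBall_of_pos hR, hfr] at hcomp
    have hLHS : (∫ x in ball (0 : EuclideanSpace ℝ (Fin n)) 1, ‖R • x‖ ^ (-s))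
        = R ^ (-s) * ∫ z in ball (0 : EuclideanSpace ℝ (Fin n)) 1, ‖z‖ ^ (-s) := by
      rw [← integral_const_mul]
      refine setIntegral_congr_fun measurableSet_ball fun x _ => ?_
      rw [norm_smul, Real.norm_eq_abs, abs_of_pos hR, Real.mul_rpow hR.le (norm_nonneg _)]
    rw [hLHS, smul_eq_mul] at hcomp
    have hRn : (R ^ n : ℝ) ≠ 0 := by positivity
    simp only at hcomp
    have : (∫ z in ball (0 : EuclideanSpace ℝ (Fin n)) R, ‖z‖ ^ (-s))
        = R ^ n * (R ^ (-s) * ∫ z in ball (0 : EuclideanSpace ℝ (Fin n)) 1, ‖z‖ ^ (-s)) := by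
      rw [hcomp]; field_simp
    rw [this, ← Real.rpow_natCast R n, ← mul_assoc, ← Real.rpow_add hR]
    norm_num [sub_eq_add_neg]
  -- translation
  have hind : (ball η R).indicator (fun y : EuclideanSpace ℝ (Fin n) => ‖y - η‖ ^ (-s))
      = fun y => (ball (0 : EuclideanSpace ℝ (Fin n)) R).indicator
          (fun z => ‖z‖ ^ (-s)) (y - η) := by
    funext y
    by_cases h : y ∈ ball η R
    · rw [indicator_of_mem h, indicator_of_mem (by simpa [mem_ball, dist_eq_norm, sub_zero] using h)]
    · rw [indicator_of_notMem h,
        indicator_of_notMem (by simpa [mem_ball, dist_eq_norm, sub_zero] using h)]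
  have hII : Integrable ((ball (0 : EuclideanSpace ℝ (Fin n)) R).indicator
      (fun z => ‖z‖ ^ (-s))) volume := (integrable_indicator_iff measurableSet_ball).2 hIR
  have hIIc := hII.comp_sub_right η
  have hIηR : IntegrableOn (fun y : EuclideanSpace ℝ (Fin n) => ‖y - η‖ ^ (-s)) (ball η R) volume :=
    (integrable_indicator_iff measurableSet_ball).1 (hind ▸ hIIc)
  refine ⟨hIηR, ?_⟩
  calc (∫ y in ball η R, ‖y - η‖ ^ (-s))
      = ∫ y, (ball η R).indicator (fun y : EuclideanSpace ℝ (Fin n) => ‖y - η‖ ^ (-s)) y :=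
        (integral_indicator measurableSet_ball).symm
    _ = ∫ y, (ball (0 : EuclideanSpace ℝ (Fin n)) R).indicator (fun z => ‖z‖ ^ (-s)) (y - η) := by
        rw [hind]
    _ = ∫ z, (ball (0 : EuclideanSpace ℝ (Fin n)) R).indicator (fun z => ‖z‖ ^ (-s)) z :=
        integral_sub_right_eq_self _ η
    _ = ∫ z in ball (0 : EuclideanSpace ℝ (Fin n)) R, ‖z‖ ^ (-s) :=
        integral_indicator measurableSet_ball
    _ = R ^ ((n:ℝ) - s) * ∫ z in ball (0 : EuclideanSpace ℝ (Fin n)) 1, ‖z‖ ^ (-s) := hval0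
set_option maxHeartbeats 1000000 in
lemma aux_core {n : ℕ} (hn : 0 < n) {a b : ℝ} (hb : 0 < b) (hab : a + b = n) (h2b : 2 * b < n) :
    ∃ C : ℝ, 0 < C ∧ ∀ l : ℝ, 0 < l → ∀ η : EuclideanSpace ℝ (Fin n),
      (∫ y : EuclideanSpace ℝ (Fin n), (1 + ‖y‖ ^ 2) ^ (-a) * (l ^ 2 + ‖y - η‖ ^ 2) ^ (-b))
        ≤ C * (1 + l ^ 2 + ‖η‖ ^ 2) ^ (-b) := by
  have hna : (n:ℝ) < 2 * a := by linarith
  have ha0 : (0:ℝ) ≤ a := by linarith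
  have hInt_a := aux_int_a (n := n) hna
  have h2b0 : 0 < 2 * b := by linarith
  have hK1int := aux_ballInt hn h2b0 h2b
  set Ca := ∫ y : EuclideanSpace ℝ (Fin n), (1 + ‖y‖ ^ 2) ^ (-a) with hCa
  set K1 := ∫ z in Metric.ball (0 : EuclideanSpace ℝ (Fin n)) 1, ‖z‖ ^ (-(2*b)) with hK1
  have hCa0 : 0 ≤ Ca := integral_nonneg fun y => rpow_nonneg (by positivity) _
  have hK10 : 0 ≤ K1 :=
    setIntegral_nonneg measurableSet_ball fun z _ => rpow_nonneg (norm_nonneg _) _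
  refine ⟨4 ^ b * Ca + 4 ^ ((n:ℝ)/2) * K1 + 1, by positivity, ?_⟩
  intro l hl η
  set N := 1 + l ^ 2 + ‖η‖ ^ 2 with hN
  have hN1 : 1 ≤ N := by nlinarith [sq_nonneg l, sq_nonneg ‖η‖]
  have hN0 : 0 < N := by linarith
  have hN4 : 0 < N / 4 := by linarith
  have hNb : 0 < N ^ (-b) := rpow_pos_of_pos hN0 _
  have hdiv : ∀ e : ℝ, (N/4 : ℝ) ^ (-e) = 4 ^ e * N ^ (-e) := by
    intro e
    rw [Real.div_rpow hN0.le (by norm_num : (0:ℝ) ≤ 4),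
      Real.rpow_neg (by norm_num : (0:ℝ) ≤ 4) e, div_eq_mul_inv, inv_inv]
    ring
  set g := fun y : EuclideanSpace ℝ (Fin n) =>
    (1 + ‖y‖ ^ 2) ^ (-a) * (l ^ 2 + ‖y - η‖ ^ 2) ^ (-b) with hg
  have hg0 : ∀ y, 0 ≤ g y := fun y =>
    mul_nonneg (rpow_nonneg (by positivity) _) (rpow_nonneg (by positivity) _)
  have hgc : Continuous g := by
    apply Continuous.mul
    · apply Continuous.rpow_const (by fun_prop)
      intro y; left; positivity
    · apply Continuous.rpow_const (by fun_prop)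
      intro y; left; positivity
  have hgint : Integrable g volume := by
    refine (hInt_a.const_mul ((l ^ 2) ^ (-b))).mono' hgc.aestronglyMeasurable
      (ae_of_all _ fun y => ?_)
    rw [Real.norm_eq_abs, abs_of_nonneg (hg0 y)]
    calc g y ≤ (1 + ‖y‖ ^ 2) ^ (-a) * (l ^ 2) ^ (-b) := by
          refine mul_le_mul_of_nonneg_left ?_ (rpow_nonneg (by positivity) _)
          exact rpow_le_rpow_of_nonpos (by positivity) (by nlinarith [sq_nonneg ‖y - η‖])
            (neg_nonpos.2 hb.le)
      _ = (l ^ 2) ^ (-b) * (1 + ‖y‖ ^ 2) ^ (-a) := mul_comm _ _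
  set A := {y : EuclideanSpace ℝ (Fin n) | N / 4 ≤ l ^ 2 + ‖y - η‖ ^ 2} with hA
  have hAm : MeasurableSet A := measurableSet_le measurable_const (by fun_prop)
  have hsplit := (integral_add_compl hAm hgint).symm
  -- piece A
  have hpieceA : (∫ y in A, g y) ≤ 4 ^ b * Ca * N ^ (-b) := by
    have h1 : (∫ y in A, g y) ≤ ∫ y in A, (N/4) ^ (-b) * (1 + ‖y‖ ^ 2) ^ (-a) := by
      refine setIntegral_mono_on hgint.integrableOn
        ((hInt_a.const_mul _).integrableOn) hAm fun y hy => ?_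
      have h2 : (l ^ 2 + ‖y - η‖ ^ 2) ^ (-b) ≤ (N/4) ^ (-b) :=
        rpow_le_rpow_of_nonpos hN4 hy (neg_nonpos.2 hb.le)
      calc g y ≤ (1 + ‖y‖ ^ 2) ^ (-a) * (N/4) ^ (-b) :=
            mul_le_mul_of_nonneg_left h2 (rpow_nonneg (by positivity) _)
        _ = (N/4) ^ (-b) * (1 + ‖y‖ ^ 2) ^ (-a) := mul_comm _ _
    have h3 : (∫ y in A, (1 + ‖y‖ ^ 2) ^ (-a)) ≤ Ca :=
      setIntegral_le_integral hInt_a (ae_of_all _ fun y => rpow_nonneg (by positivity) _)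
    calc (∫ y in A, g y) ≤ (N/4) ^ (-b) * ∫ y in A, (1+‖y‖^2)^(-a) := by
          rw [← integral_const_mul]; exact h1
      _ ≤ (N/4) ^ (-b) * Ca := mul_le_mul_of_nonneg_left h3 (rpow_nonneg hN4.le _)
      _ = 4 ^ b * Ca * N ^ (-b) := by rw [hdiv b]; ring
  -- piece B
  set R := Real.sqrt (N/4) with hRdef
  have hRpos : 0 < R := Real.sqrt_pos.2 hN4
  obtain ⟨hIball, hIval⟩ := aux_ball_val hn h2b0 h2b η hRpos
  have hsubc : Aᶜ ⊆ Metric.ball η R := by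
    intro y hy
    simp only [hA, Set.mem_compl_iff, Set.mem_setOf_eq, not_le] at hy
    rw [Metric.mem_ball, dist_eq_norm]
    exact (Real.lt_sqrt (norm_nonneg _)).2 (by nlinarith [sq_nonneg l])
  haveI : Nontrivial (EuclideanSpace ℝ (Fin n)) :=
    nontrivial_of_finrank_pos (R := ℝ) (by rw [finrank_euclideanSpace_fin]; exact hn)
  have hη0 : ∀ᵐ y : EuclideanSpace ℝ (Fin n) ∂volume, y ≠ η := by
    rw [ae_iff]
    simp only [ne_eq, not_not, Set.setOf_eq_eq_singleton]
    exact measure_singleton η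
  have haeB : ∀ᵐ y ∂(volume.restrict Aᶜ), g y ≤ (N/4) ^ (-a) * ‖y - η‖ ^ (-(2*b)) := by
    refine ((ae_restrict_mem hAm.compl).and (ae_restrict_of_ae hη0)).mono ?_
    rintro y ⟨hyA, hyne⟩
    simp only [hA, Set.mem_compl_iff, Set.mem_setOf_eq, not_le] at hyA
    have hyη : 0 < ‖y - η‖ := by rw [norm_pos_iff, sub_ne_zero]; exact hyne
    have hnormle : ‖η‖ ≤ ‖y‖ + ‖y - η‖ := by
      calc ‖η‖ = ‖y - (y - η)‖ := by rw [sub_sub_cancel]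
        _ ≤ ‖y‖ + ‖y - η‖ := norm_sub_le _ _
    have hsq : ‖η‖ ^ 2 ≤ 2 * ‖y‖ ^ 2 + 2 * ‖y - η‖ ^ 2 := by
      nlinarith [pow_le_pow_left₀ (norm_nonneg η) hnormle 2, sq_nonneg (‖y‖ - ‖y - η‖)]
    have hlow : N / 4 ≤ 1 + ‖y‖ ^ 2 := by
      linarith [hsq, hyA, sq_nonneg l]
    have h1 : (1 + ‖y‖ ^ 2) ^ (-a) ≤ (N/4) ^ (-a) :=
      rpow_le_rpow_of_nonpos hN4 hlow (neg_nonpos.2 ha0)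
    have h2 : (l ^ 2 + ‖y - η‖ ^ 2) ^ (-b) ≤ ‖y - η‖ ^ (-(2*b)) := by
      have h2' : (l ^ 2 + ‖y - η‖ ^ 2) ^ (-b) ≤ (‖y - η‖ ^ 2) ^ (-b) :=
        rpow_le_rpow_of_nonpos (by positivity) (by nlinarith [sq_nonneg l]) (neg_nonpos.2 hb.le)
      have hconv : ((‖y - η‖ ^ 2 : ℝ)) ^ (-b) = ‖y - η‖ ^ (-(2*b)) := by
        rw [← Real.rpow_natCast (‖y - η‖) 2, ← Real.rpow_mul (norm_nonneg _)]
        congr 1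
        push_cast
        ring
      rwa [hconv] at h2'
    calc g y ≤ (N/4) ^ (-a) * (l ^ 2 + ‖y - η‖ ^ 2) ^ (-b) :=
          mul_le_mul_of_nonneg_right h1 (rpow_nonneg (by positivity) _)
      _ ≤ (N/4) ^ (-a) * ‖y - η‖ ^ (-(2*b)) :=
          mul_le_mul_of_nonneg_left h2 (rpow_nonneg hN4.le _)
  have hmajball : IntegrableOn
      (fun y : EuclideanSpace ℝ (Fin n) => (N/4) ^ (-a) * ‖y - η‖ ^ (-(2*b)))
      (Metric.ball η R) volume := hIball.const_mul _
  have hpieceB : (∫ y in Aᶜ, g y) ≤ 4 ^ ((n:ℝ)/2) * K1 * N ^ (-b) := by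
    have h1 : (∫ y in Aᶜ, g y) ≤ ∫ y in Aᶜ, (N/4) ^ (-a) * ‖y - η‖ ^ (-(2*b)) :=
      setIntegral_mono_ae_restrict hgint.integrableOn (hmajball.mono_set hsubc) haeB
    have h2 : (∫ y in Aᶜ, (N/4) ^ (-a) * ‖y - η‖ ^ (-(2*b)))
        ≤ ∫ y in Metric.ball η R, (N/4) ^ (-a) * ‖y - η‖ ^ (-(2*b)) := by
      refine setIntegral_mono_set hmajball
        (ae_of_all _ fun y => mul_nonneg (rpow_nonneg hN4.le _) (rpow_nonneg (norm_nonneg _) _))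
        (HasSubset.Subset.eventuallyLE hsubc)
    have h3 : (∫ y in Metric.ball η R, (N/4) ^ (-a) * ‖y - η‖ ^ (-(2*b)))
        = (N/4) ^ (-a) * (R ^ ((n:ℝ) - 2*b) * K1) := by
      rw [integral_const_mul, hIval]
    have hRe : R ^ ((n:ℝ) - 2*b) = (N/4) ^ (((n:ℝ) - 2*b)/2) := by
      rw [hRdef, Real.sqrt_eq_rpow, ← Real.rpow_mul hN4.le]
      ring_nf
    have h5 : (N/4 : ℝ) ^ (-a) * (N/4) ^ (((n:ℝ) - 2*b)/2) = (N/4) ^ (-((n:ℝ)/2)) := by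
      rw [← Real.rpow_add hN4]; congr 1; linarith
    have h6 : (N/4 : ℝ) ^ (-((n:ℝ)/2)) ≤ 4 ^ ((n:ℝ)/2) * N ^ (-b) := by
      rw [hdiv ((n:ℝ)/2)]
      refine mul_le_mul_of_nonneg_left ?_ (rpow_nonneg (by norm_num) _)
      exact rpow_le_rpow_of_exponent_le hN1 (by linarith)
    calc (∫ y in Aᶜ, g y) ≤ (N/4) ^ (-a) * (R ^ ((n:ℝ) - 2*b) * K1) := by
          rw [← h3]; exact h1.trans h2
      _ = ((N/4) ^ (-a) * (N/4) ^ (((n:ℝ) - 2*b)/2)) * K1 := by rw [hRe]; ring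
      _ = (N/4) ^ (-((n:ℝ)/2)) * K1 := by rw [h5]
      _ ≤ (4 ^ ((n:ℝ)/2) * N ^ (-b)) * K1 :=
          mul_le_mul_of_nonneg_right h6 hK10
      _ = 4 ^ ((n:ℝ)/2) * K1 * N ^ (-b) := by ring
  have hfinal : (∫ y : EuclideanSpace ℝ (Fin n), g y)
      ≤ (4 ^ b * Ca + 4 ^ ((n:ℝ)/2) * K1) * N ^ (-b) := by
    rw [hsplit]
    calc (∫ y in A, g y) + ∫ y in Aᶜ, g y
        ≤ 4 ^ b * Ca * N ^ (-b) + 4 ^ ((n:ℝ)/2) * K1 * N ^ (-b) := add_le_add hpieceA hpieceB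
      _ = (4 ^ b * Ca + 4 ^ ((n:ℝ)/2) * K1) * N ^ (-b) := by ring
  calc (∫ y : EuclideanSpace ℝ (Fin n), g y)
      ≤ (4 ^ b * Ca + 4 ^ ((n:ℝ)/2) * K1) * N ^ (-b) := hfinal
    _ ≤ (4 ^ b * Ca + 4 ^ ((n:ℝ)/2) * K1 + 1) * N ^ (-b) := by nlinarith [hNb]

lemma bubble_pow {μ ν A : ℝ} (hμ : 0 < μ) (hν : 0 < ν) (hA : 0 < A) (α t : ℝ) :
    (μ ^ α * (ν ^ 2 * A) ^ (-α)) ^ t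
      = μ ^ (α * t) * ν ^ (-(2 * (α * t))) * A ^ (-(α * t)) := by
  have h2 : (ν ^ 2 : ℝ) = ν ^ (2:ℝ) := by
    rw [← Real.rpow_natCast ν 2]; norm_num
  rw [h2, Real.mul_rpow (rpow_nonneg hν.le _) hA.le,
    ← Real.rpow_mul hν.le,
    Real.mul_rpow (rpow_nonneg hμ.le _)
      (mul_nonneg (rpow_nonneg hν.le _) (rpow_nonneg hA.le _)),
    Real.mul_rpow (rpow_nonneg hν.le _) (rpow_nonneg hA.le _),
    ← Real.rpow_mul hμ.le, ← Real.rpow_mul hν.le, ← Real.rpow_mul hA.le]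
  rw [show 2 * -α * t = -(2 * (α * t)) by ring, show -α * t = -(α * t) by ring, ← mul_assoc]

set_option maxHeartbeats 1000000 in
theorem stmt13 (k n : ℕ) (hk : 1 ≤ k) (hn : 2 * k < n) (p q : ℝ)
    (hp1 : 1 < p) (hq1 : 1 < q)
    (hpq : p + q = 2 * (n : ℝ) / ((n : ℝ) - 2 * k))
    (hp : (n : ℝ) / ((n : ℝ) - 2 * k) < p)
    (hq : q < (n : ℝ) / ((n : ℝ) - 2 * k)) :
    ∃ C : ℝ, 0 < C ∧
      ∀ μ₁ μ₂ : ℝ, 0 < μ₁ → 0 < μ₂ → ∀ ξ₁ ξ₂ : EuclideanSpace ℝ (Fin n),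
        (∫ x : EuclideanSpace ℝ (Fin n),
            stdBubble n k μ₁ ξ₁ x ^ p * stdBubble n k μ₂ ξ₂ x ^ q) ≤
          C * interact n k μ₁ μ₂ ξ₁ ξ₂ ^ q := by
  have hn0 : 0 < n := by omega
  have hnk : (0:ℝ) < (n:ℝ) - 2 * k := by
    have : ((2 * k : ℕ) : ℝ) < (n : ℕ) := by exact_mod_cast hn
    push_cast at this
    linarith
  set α : ℝ := ((n:ℝ) - 2 * k)/2 with hα
  have hα0 : 0 < α := by rw [hα]; linarith
  have hc : 0 < cnk n k := by
    rw [cnk]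
    apply rpow_pos_of_pos
    apply Finset.prod_pos
    intro j hj
    have hj0 : (0:ℝ) ≤ 2 * (j:ℝ) := by positivity
    linarith
  have hq0 : 0 < q := by linarith
  have hb0 : 0 < α * q := mul_pos hα0 hq0
  have hab : α * p + α * q = (n:ℝ) := by
    rw [← mul_add, hpq, hα]
    field_simp
  have h2b : 2 * (α * q) < (n:ℝ) := by
    have h1 : α * q < α * ((n:ℝ)/((n:ℝ) - 2*k)) := mul_lt_mul_of_pos_left hq hα0
    have h2 : α * ((n:ℝ)/((n:ℝ) - 2*k)) = (n:ℝ)/2 := by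
      rw [hα]
      field_simp
    rw [h2] at h1
    linarith
  obtain ⟨C₁, hC₁, hcore⟩ := aux_core hn0 hb0 hab h2b
  refine ⟨C₁ * (cnk n k) ^ ((n:ℝ)/2),
    mul_pos hC₁ (rpow_pos_of_pos hc _), ?_⟩
  intro μ₁ μ₂ hμ₁ hμ₂ ξ₁ ξ₂
  have hfr : finrank ℝ (EuclideanSpace ℝ (Fin n)) = n := finrank_euclideanSpace_fin
  have hr : 0 < Real.sqrt (cnk n k) * μ₁ := mul_pos (Real.sqrt_pos.2 hc) hμ₁
  set r : ℝ := Real.sqrt (cnk n k) * μ₁ with hrdef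
  have hr2 : r ^ 2 = cnk n k * μ₁ ^ 2 := by
    rw [hrdef, mul_pow, Real.sq_sqrt hc.le]
  set lam : ℝ := μ₂ / μ₁ with hlam
  have hlam0 : 0 < lam := div_pos hμ₂ hμ₁
  set η : EuclideanSpace ℝ (Fin n) := r⁻¹ • (ξ₂ - ξ₁) with hη
  set S : ℝ := μ₁ / μ₂ + μ₂ / μ₁ + (cnk n k)⁻¹ * ‖ξ₁ - ξ₂‖ ^ 2 / (μ₁ * μ₂) with hS
  have hS0 : 0 < S := by
    rw [hS]
    have h1 : 0 < μ₁ / μ₂ := div_pos hμ₁ hμ₂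
    have h2 : 0 < μ₂ / μ₁ := div_pos hμ₂ hμ₁
    have h3 : 0 ≤ (cnk n k)⁻¹ * ‖ξ₁ - ξ₂‖ ^ 2 / (μ₁ * μ₂) := by positivity
    linarith
  set F := fun x : EuclideanSpace ℝ (Fin n) =>
    stdBubble n k μ₁ ξ₁ x ^ p * stdBubble n k μ₂ ξ₂ x ^ q with hF
  set CC : ℝ := μ₁ ^ (α * p) * μ₁ ^ (-(2 * (α * p)))
      * (μ₂ ^ (α * q) * μ₁ ^ (-(2 * (α * q)))) with hCC
  have hCC0 : 0 ≤ CC := by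
    rw [hCC]
    positivity
  -- pointwise identity
  have hpoint : ∀ y : EuclideanSpace ℝ (Fin n), F (ξ₁ + r • y) =
      CC * ((1 + ‖y‖ ^ 2) ^ (-(α * p)) * (lam ^ 2 + ‖y - η‖ ^ 2) ^ (-(α * q))) := by
    intro y
    have hb1 : μ₁ ^ 2 + (cnk n k)⁻¹ * ‖ξ₁ + r • y - ξ₁‖ ^ 2 = μ₁ ^ 2 * (1 + ‖y‖ ^ 2) := by
      rw [add_sub_cancel_left, norm_smul, Real.norm_eq_abs, abs_of_pos hr, mul_pow, hr2]
      field_simp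
    have heq2 : ξ₁ + r • y - ξ₂ = r • (y - η) := by
      rw [hη, smul_sub, smul_inv_smul₀ hr.ne']
      abel
    have hb2 : μ₂ ^ 2 + (cnk n k)⁻¹ * ‖ξ₁ + r • y - ξ₂‖ ^ 2
        = μ₁ ^ 2 * (lam ^ 2 + ‖y - η‖ ^ 2) := by
      rw [heq2, norm_smul, Real.norm_eq_abs, abs_of_pos hr, mul_pow, hr2, hlam]
      field_simp
    rw [hF]
    simp only [stdBubble]
    rw [hb1, hb2]
    rw [show ((2 * (k:ℝ)) - n)/2 = -α from by rw [hα]; ring,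
      show ((n:ℝ) - 2 * k)/2 = α from hα.symm]
    rw [bubble_pow hμ₁ hμ₁ (by positivity) α p, bubble_pow hμ₂ hμ₁ (by positivity) α q]
    rw [hCC]
    ring
  -- change of variables
  have hcv1 := Measure.integral_comp_smul_of_nonneg
    (volume : Measure (EuclideanSpace ℝ (Fin n)))
    (fun z => F (ξ₁ + z)) r (hR := hr.le)
  rw [hfr] at hcv1
  have hcv2 : (∫ z : EuclideanSpace ℝ (Fin n), F (ξ₁ + z)) = ∫ x, F x :=
    integral_add_left_eq_self F ξ₁
  have hrn : (0:ℝ) < r ^ n := pow_pos hr n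
  have hItot : (∫ x, F x) = r ^ n * ∫ y, F (ξ₁ + r • y) := by
    rw [hcv1, hcv2, smul_eq_mul, ← mul_assoc, mul_inv_cancel₀ hrn.ne', one_mul]
  -- core bound
  have hstep := hcore lam hlam0 η
  -- geometric identity
  have hNS : 1 + lam ^ 2 + ‖η‖ ^ 2 = lam * S := by
    have hηn : ‖η‖ ^ 2 = (cnk n k * μ₁ ^ 2)⁻¹ * ‖ξ₁ - ξ₂‖ ^ 2 := by
      rw [hη, norm_smul, Real.norm_eq_abs, abs_of_pos (inv_pos.2 hr), mul_pow, inv_pow, hr2,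
        norm_sub_rev]
    rw [hηn, hS, hlam]
    field_simp
  -- interact
  have hint : interact n k μ₁ μ₂ ξ₁ ξ₂ ^ q = S ^ (-(α * q)) := by
    rw [interact, ← hS, ← Real.rpow_mul hS0.le]
    congr 1
    rw [hα]
    ring
  -- scalar identity
  have e1 : (lam * S) ^ (-(α * q)) = lam ^ (-(α * q)) * S ^ (-(α * q)) :=
    Real.mul_rpow hlam0.le hS0.le
  have e2 : lam ^ (-(α * q)) = μ₂ ^ (-(α * q)) * μ₁ ^ (α * q) := by
    rw [hlam, Real.div_rpow hμ₂.le hμ₁.le, Real.rpow_neg hμ₁.le, div_eq_mul_inv, inv_inv]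
  have e3 : r ^ n = (cnk n k) ^ ((n:ℝ)/2) * μ₁ ^ ((n:ℝ)) := by
    rw [hrdef, mul_pow, ← Real.rpow_natCast (Real.sqrt (cnk n k)) n, Real.sqrt_eq_rpow,
      ← Real.rpow_mul hc.le, ← Real.rpow_natCast μ₁ n]
    rw [show 1/2 * (n:ℝ) = (n:ℝ)/2 by ring]
  have m1 : μ₁ ^ ((n:ℝ)) * μ₁ ^ (α * p) * μ₁ ^ (-(2 * (α * p))) * μ₁ ^ (-(2 * (α * q)))
      * μ₁ ^ (α * q) = 1 := by
    rw [← Real.rpow_add hμ₁, ← Real.rpow_add hμ₁, ← Real.rpow_add hμ₁, ← Real.rpow_add hμ₁,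
      show (n:ℝ) + α * p + -(2 * (α * p)) + -(2 * (α * q)) + α * q = 0 from by linarith,
      Real.rpow_zero]
  have m2 : μ₂ ^ (α * q) * μ₂ ^ (-(α * q)) = 1 := by
    rw [← Real.rpow_add hμ₂, add_neg_cancel, Real.rpow_zero]
  have hscal : r ^ n * (CC * (C₁ * (lam * S) ^ (-(α * q))))
      = C₁ * (cnk n k) ^ ((n:ℝ)/2) * S ^ (-(α * q)) := by
    rw [e1, e2, e3, hCC]
    calc ((cnk n k) ^ ((n:ℝ)/2) * μ₁ ^ ((n:ℝ))) *
          ((μ₁ ^ (α * p) * μ₁ ^ (-(2 * (α * p))) * (μ₂ ^ (α * q) * μ₁ ^ (-(2 * (α * q)))))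
            * (C₁ * (μ₂ ^ (-(α * q)) * μ₁ ^ (α * q) * S ^ (-(α * q)))))
        = (μ₁ ^ ((n:ℝ)) * μ₁ ^ (α * p) * μ₁ ^ (-(2 * (α * p))) * μ₁ ^ (-(2 * (α * q)))
            * μ₁ ^ (α * q)) * (μ₂ ^ (α * q) * μ₂ ^ (-(α * q)))
            * (C₁ * (cnk n k) ^ ((n:ℝ)/2) * S ^ (-(α * q))) := by ring
      _ = C₁ * (cnk n k) ^ ((n:ℝ)/2) * S ^ (-(α * q)) := by
          rw [m1, m2]; ring
  -- assemble
  calc (∫ x, F x) = r ^ n * ∫ y, F (ξ₁ + r • y) := hItot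
    _ = r ^ n * (CC * ∫ y : EuclideanSpace ℝ (Fin n),
          (1 + ‖y‖ ^ 2) ^ (-(α * p)) * (lam ^ 2 + ‖y - η‖ ^ 2) ^ (-(α * q))) := by
        rw [show (fun y : EuclideanSpace ℝ (Fin n) => F (ξ₁ + r • y))
            = fun y => CC * ((1 + ‖y‖ ^ 2) ^ (-(α * p)) * (lam ^ 2 + ‖y - η‖ ^ 2) ^ (-(α * q)))
          from funext hpoint, integral_const_mul]
    _ ≤ r ^ n * (CC * (C₁ * (1 + lam ^ 2 + ‖η‖ ^ 2) ^ (-(α * q)))) := by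
        refine mul_le_mul_of_nonneg_left (mul_le_mul_of_nonneg_left ?_ hCC0) hrn.le
        exact hstep
    _ = r ^ n * (CC * (C₁ * (lam * S) ^ (-(α * q)))) := by rw [hNS]
    _ = C₁ * (cnk n k) ^ ((n:ℝ)/2) * S ^ (-(α * q)) := hscal
    _ = C₁ * (cnk n k) ^ ((n:ℝ)/2) * interact n k μ₁ μ₂ ξ₁ ξ₂ ^ q := by rw [hint]
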